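/- Let Θ be the k-dimensional probability simplex, f : Θ → ℝ bounded continuous, and M a set of probability densities on Θ with lower expectation E̲(f) := inf_{p∈M} ∫ f p dθ = f_min := inf_Θ f. Let L be bounded, nonnegative, measurable, strictly positive at each minimizer of f and continuous in a neighborhood of each minimizer. Then E̲(f | data) := inf_{p∈M} (∫ f L p dθ)/(∫ L p dθ) = f_min. -/

import Mathlib

open MeasureTheory Set Filter Topology

/-- Vacuity of the posterior lower expectation: if the prior lower expectation of `f`
over the set of densities `M` on the simplex is the vacuous value `f_min`, and the
likelihood `L` is bounded, nonnegative, measurable, strictly positive at each minimizer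
of `f` and continuous near each minimizer, then the posterior lower expectation
(over densities with positive normalizer) is still `f_min`. -/
theorem stmt_6 (k : ℕ) (hk : 0 < k)
    (μ : Measure (Fin k → ℝ))
    (hsupp : ∀ᵐ θ ∂μ, θ ∈ stdSimplex ℝ (Fin k))
    (M : Set ((Fin k → ℝ) → ℝ))
    (hM : ∀ p ∈ M, (∀ θ, 0 ≤ p θ) ∧ Integrable p μ ∧ ∫ θ, p θ ∂μ = 1)
    (f : (Fin k → ℝ) → ℝ) (hf : ContinuousOn f (stdSimplex ℝ (Fin k)))
    (fmin : ℝ) (hfmin : fmin = sInf (f '' stdSimplex ℝ (Fin k)))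
    (hprior : sInf ((fun p => ∫ θ, f θ * p θ ∂μ) '' M) = fmin)
    (L : (Fin k → ℝ) → ℝ) (hLm : Measurable L)
    (hL0 : ∀ θ ∈ stdSimplex ℝ (Fin k), 0 ≤ L θ)
    (hLb : BddAbove (L '' stdSimplex ℝ (Fin k)))
    (hLpos : ∀ θ ∈ stdSimplex ℝ (Fin k), f θ = fmin → 0 < L θ)
    (hLcont : ∀ θ ∈ stdSimplex ℝ (Fin k), f θ = fmin → ∃ U ∈ 𝓝 θ, ContinuousOn L U) :
    sInf ((fun p => (∫ θ, f θ * L θ * p θ ∂μ) / ∫ θ, L θ * p θ ∂μ) ''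
        {p ∈ M | 0 < ∫ θ, L θ * p θ ∂μ}) = fmin := by
  rcases M.eq_empty_or_nonempty with hMe | hMne
  · subst hMe
    simp only [Set.sep_empty, Set.image_empty, Real.sInf_empty] at hprior ⊢
    exact hprior
  set S := stdSimplex ℝ (Fin k) with hSdef
  have hSne : S.Nonempty := ⟨Pi.single ⟨0, hk⟩ 1, single_mem_stdSimplex ℝ _⟩
  have hScomp : IsCompact S := isCompact_stdSimplex ℝ (Fin k)
  have hSclosed : IsClosed S := isClosed_stdSimplex ℝ (Fin k)
  -- minimizer of f on S
  obtain ⟨θ₀, hθ₀S, hθ₀min⟩ := hScomp.exists_isMinOn hSne hf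
  have hfmin' : fmin = f θ₀ := by
    rw [hfmin]
    exact IsLeast.csInf_eq ⟨mem_image_of_mem f hθ₀S, by
      rintro y ⟨θ, hθ, rfl⟩; exact hθ₀min hθ⟩
  have hge : ∀ θ ∈ S, fmin ≤ f θ := fun θ hθ => hfmin' ▸ hθ₀min hθ
  -- bound on f
  obtain ⟨Fb, hFb⟩ := hScomp.exists_bound_of_continuousOn hf
  -- bound on L
  obtain ⟨B, hB⟩ := hLb
  have hBS : ∀ θ ∈ S, L θ ≤ B := fun θ hθ => hB (mem_image_of_mem L hθ)
  have hBpos : 0 < B := lt_of_lt_of_le (hLpos θ₀ hθ₀S hfmin'.symm) (hBS θ₀ hθ₀S)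
  -- measurability of f
  have hres : μ.restrict S = μ := Measure.restrict_eq_self_of_ae_mem hsupp
  have hfae : AEStronglyMeasurable f μ := by
    have h : AEMeasurable f (μ.restrict S) := hf.aemeasurable hSclosed.measurableSet
    rw [hres] at h
    exact h.aestronglyMeasurable
  -- set of minimizers
  set K := S ∩ f ⁻¹' {fmin} with hKdef
  have hKcomp : IsCompact K :=
    IsCompact.of_isClosed_subset hScomp
      (hf.preimage_isClosed_of_isClosed hSclosed isClosed_singleton) inter_subset_left
  have hθ₀K : θ₀ ∈ K := ⟨hθ₀S, by simp [hfmin'.symm]⟩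
  -- neighbourhoods where L is bounded below
  have hnbhd : ∀ x, ∃ V : Set (Fin k → ℝ),
      x ∈ K → (IsOpen V ∧ x ∈ V ∧ ∀ y ∈ V, L x / 2 < L y) := by
    intro x
    by_cases hx : x ∈ K
    · obtain ⟨U, hU, hUc⟩ := hLcont x hx.1 hx.2
      have hxint : x ∈ interior U := mem_interior_iff_mem_nhds.2 hU
      have hc : ContinuousOn L (interior U) := hUc.mono interior_subset
      refine ⟨interior U ∩ L ⁻¹' Ioi (L x / 2),
        fun _ => ⟨hc.isOpen_inter_preimage isOpen_interior isOpen_Ioi,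
          ⟨hxint, half_lt_self (hLpos x hx.1 hx.2)⟩, fun y hy => hy.2⟩⟩
    · exact ⟨∅, fun h => absurd h hx⟩
  choose V hV using hnbhd
  obtain ⟨t, htK, hcover⟩ := hKcomp.elim_nhds_subcover V
    (fun x hx => ((hV x hx).1).mem_nhds (hV x hx).2.1)
  have htne : t.Nonempty := by
    have := hcover hθ₀K
    rcases mem_iUnion₂.1 this with ⟨x, hx, -⟩
    exact ⟨x, hx⟩
  set c := t.inf' htne (fun x => L x / 2) with hcdef
  have hcpos : 0 < c := by
    rw [hcdef, Finset.lt_inf'_iff]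
    intro x hx
    have hxK := htK x hx
    exact half_pos (hLpos x hxK.1 hxK.2)
  set W := ⋃ x ∈ t, V x with hWdef
  have hWopen : IsOpen W :=
    isOpen_biUnion fun x hx => (hV x (htK x hx)).1
  have hWlb : ∀ θ ∈ W, c ≤ L θ := by
    intro θ hθ
    rcases mem_iUnion₂.1 hθ with ⟨x, hx, hxV⟩
    have := (hV x (htK x hx)).2.2 θ hxV
    have hle : c ≤ L x / 2 := Finset.inf'_le _ hx
    linarith
  have hKW : K ⊆ W := hcover
  -- gap δ0
  obtain ⟨δ0, hδ0pos, hδ0⟩ : ∃ δ0 > 0, ∀ θ ∈ S, f θ < fmin + δ0 → θ ∈ W := by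
    rcases eq_empty_or_nonempty (S \ W) with he | hne'
    · exact ⟨1, one_pos, fun θ hθ _ => by
        by_contra hW
        exact (eq_empty_iff_forall_notMem.1 he θ) ⟨hθ, hW⟩⟩
    · have hcomp' : IsCompact (S \ W) := hScomp.diff hWopen
      obtain ⟨θ₁, hθ₁, hθ₁min⟩ := hcomp'.exists_isMinOn hne' (hf.mono diff_subset)
      have h1 : fmin < f θ₁ :=
        lt_of_le_of_ne (hge θ₁ hθ₁.1) fun h => hθ₁.2 (hKW ⟨hθ₁.1, h.symm⟩)
      refine ⟨f θ₁ - fmin, by linarith, fun θ hθ hlt => ?_⟩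
      by_contra hW
      have h2 : f θ₁ ≤ f θ := hθ₁min (⟨hθ, hW⟩ : θ ∈ S \ W)
      linarith
  -- integrability facts
  have hint : ∀ p ∈ M, Integrable (fun θ => L θ * p θ) μ ∧
      Integrable (fun θ => f θ * p θ) μ ∧
      Integrable (fun θ => f θ * L θ * p θ) μ := by
    intro p hp
    obtain ⟨hp0, hpi, -⟩ := hM p hp
    have hpm := hpi.aestronglyMeasurable
    refine ⟨Integrable.mono' (hpi.const_mul B)
        (hLm.aestronglyMeasurable.mul hpm) ?_,
      Integrable.mono' (hpi.const_mul Fb) (hfae.mul hpm) ?_,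
      Integrable.mono' (hpi.const_mul (Fb * B))
        ((hfae.mul hLm.aestronglyMeasurable).mul hpm) ?_⟩
    · refine hsupp.mono fun θ hθ => ?_
      rw [Real.norm_eq_abs, abs_of_nonneg (mul_nonneg (hL0 θ hθ) (hp0 θ))]
      exact mul_le_mul_of_nonneg_right (hBS θ hθ) (hp0 θ)
    · refine hsupp.mono fun θ hθ => ?_
      rw [Real.norm_eq_abs, abs_mul, abs_of_nonneg (hp0 θ)]
      exact mul_le_mul_of_nonneg_right (hFb θ hθ) (hp0 θ)
    · refine hsupp.mono fun θ hθ => ?_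
      rw [Real.norm_eq_abs, abs_mul, abs_mul, abs_of_nonneg (hp0 θ),
        abs_of_nonneg (hL0 θ hθ)]
      have h1 : |f θ| * L θ ≤ Fb * B :=
        mul_le_mul (hFb θ hθ) (hBS θ hθ) (hL0 θ hθ) ((abs_nonneg _).trans (hFb θ hθ))
      exact mul_le_mul_of_nonneg_right h1 (hp0 θ)
  -- lower bound on numerator
  have hlow : ∀ p ∈ M, fmin * (∫ θ, L θ * p θ ∂μ) ≤ ∫ θ, f θ * L θ * p θ ∂μ := by
    intro p hp
    obtain ⟨hp0, hpi, -⟩ := hM p hp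
    obtain ⟨hLp, -, hfLp⟩ := hint p hp
    rw [← integral_const_mul]
    refine integral_mono_ae (hLp.const_mul fmin) hfLp (hsupp.mono fun θ hθ => ?_)
    dsimp only
    have h1 := hge θ hθ
    have h2 := hL0 θ hθ
    have h3 := hp0 θ
    nlinarith [mul_nonneg (mul_nonneg (sub_nonneg.2 h1) h2) h3]
  set T := ((fun p => (∫ θ, f θ * L θ * p θ ∂μ) / ∫ θ, L θ * p θ ∂μ) ''
      {p ∈ M | 0 < ∫ θ, L θ * p θ ∂μ}) with hTdef
  have hTlb : ∀ r ∈ T, fmin ≤ r := by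
    rintro r ⟨p, ⟨hpM, hpden⟩, rfl⟩
    rw [le_div_iff₀ hpden]
    exact hlow p hpM
  -- key approximation
  have hkey : ∀ ε > 0, ∃ r ∈ T, r ≤ fmin + ε := by
    intro ε hε
    set η := min (δ0 / 2) (c * ε / (2 * B)) with hηdef
    have hηpos : 0 < η :=
      lt_min (half_pos hδ0pos) (div_pos (mul_pos hcpos hε) (by linarith))
    -- pick p with prior expectation close to fmin
    have him : ((fun p => ∫ θ, f θ * p θ ∂μ) '' M).Nonempty := hMne.image _
    obtain ⟨r₀, ⟨p, hpM, rfl⟩, hr₀⟩ :=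
      exists_lt_of_csInf_lt him (by rw [hprior]; linarith : sInf _ < fmin + η)
    obtain ⟨hp0, hpi, hp1⟩ := hM p hpM
    obtain ⟨hLp, hfp, hfLp⟩ := hint p hpM
    set I2 := ∫ θ, f θ * p θ ∂μ with hI2def
    have hη'0 : 0 ≤ I2 - fmin := by
      have : fmin * 1 ≤ I2 := by
        rw [← hp1, ← integral_const_mul]
        exact integral_mono_ae (hpi.const_mul fmin) hfp
          (hsupp.mono fun θ hθ => mul_le_mul_of_nonneg_right (hge θ hθ) (hp0 θ))
      linarith
    have hη'lt : I2 - fmin < η := by linarith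
    have hcd : 0 < c / δ0 := div_pos hcpos hδ0pos
    have hcdδ : c / δ0 * δ0 = c := div_mul_cancel₀ c hδ0pos.ne'
    -- lower bound for the denominator
    have hden_ge : c - (c / δ0) * (I2 - fmin) ≤ ∫ θ, L θ * p θ ∂μ := by
      have hA : Integrable (fun θ => c * p θ - c / δ0 * (f θ * p θ)) μ := by
        exact (hpi.const_mul c).sub (hfp.const_mul (c / δ0))
      have hA2 : Integrable (fun θ => c / δ0 * fmin * p θ) μ := hpi.const_mul _
      have hInt1 : Integrable
          (fun θ => c * p θ - c / δ0 * (f θ * p θ) + c / δ0 * fmin * p θ) μ := by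
        exact hA.add hA2
      have hcalc : c - (c / δ0) * (I2 - fmin) =
          ∫ θ, (c * p θ - c / δ0 * (f θ * p θ) + c / δ0 * fmin * p θ) ∂μ := by
        rw [integral_add hA hA2,
          integral_sub (hpi.const_mul c) (hfp.const_mul (c / δ0)),
          integral_const_mul, integral_const_mul, integral_const_mul, hp1, ← hI2def]
        ring
      rw [hcalc]
      refine integral_mono_ae hInt1 hLp (hsupp.mono fun θ hθ => ?_)
      dsimp only
      have h3 := hp0 θ
      have h2 := hL0 θ hθ
      have h1 := hge θ hθ
      by_cases hcase : f θ < fmin + δ0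
      · have hLc : c ≤ L θ := hWlb θ (hδ0 θ hθ hcase)
        nlinarith [mul_nonneg hcd.le (mul_nonneg (sub_nonneg.2 h1) h3)]
      · push_neg at hcase
        have h4 : c / δ0 * δ0 ≤ c / δ0 * (f θ - fmin) := by
          apply mul_le_mul_of_nonneg_left _ hcd.le; linarith
        nlinarith [mul_nonneg h2 h3, mul_nonneg (sub_nonneg.2 h1) h3]
    set den := ∫ θ, L θ * p θ ∂μ with hdendef
    have hηδ : η ≤ δ0 / 2 := min_le_left _ _
    have hden_half : c / 2 ≤ den := by
      have h5 : c / δ0 * (I2 - fmin) ≤ c / δ0 * (δ0 / 2) :=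
        mul_le_mul_of_nonneg_left (by linarith) hcd.le
      nlinarith
    have hden_pos : 0 < den := lt_of_lt_of_le (by linarith) hden_half
    -- upper bound for the numerator
    have hnum_le : (∫ θ, f θ * L θ * p θ ∂μ) - fmin * den ≤ B * (I2 - fmin) := by
      have hB1 : Integrable (fun θ => f θ * L θ * p θ - fmin * (L θ * p θ)) μ := by
        exact hfLp.sub (hLp.const_mul fmin)
      have hB2 : Integrable (fun θ => B * (f θ * p θ) - B * fmin * p θ) μ := by
        exact (hfp.const_mul B).sub (hpi.const_mul (B * fmin))
      have h6 : (∫ θ, f θ * L θ * p θ ∂μ) - fmin * den =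
          ∫ θ, (f θ * L θ * p θ - fmin * (L θ * p θ)) ∂μ := by
        rw [integral_sub hfLp (hLp.const_mul fmin), integral_const_mul]
      have h7 : B * (I2 - fmin) = ∫ θ, (B * (f θ * p θ) - B * fmin * p θ) ∂μ := by
        rw [integral_sub (hfp.const_mul B) (hpi.const_mul (B * fmin)),
          integral_const_mul, integral_const_mul, hp1, ← hI2def]
        ring
      rw [h6, h7]
      refine integral_mono_ae hB1 hB2 (hsupp.mono fun θ hθ => ?_)
      dsimp only
      have h1 := hge θ hθ
      have h2 := hL0 θ hθ
      have h3 := hp0 θ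
      have h4 := hBS θ hθ
      nlinarith [mul_nonneg (mul_nonneg (sub_nonneg.2 h1) h3) (sub_nonneg.2 h4)]
    refine ⟨(∫ θ, f θ * L θ * p θ ∂μ) / den, ⟨p, ⟨hpM, hden_pos⟩, rfl⟩, ?_⟩
    rw [div_le_iff₀ hden_pos]
    have hη2 : η ≤ c * ε / (2 * B) := min_le_right _ _
    have h8 : B * (I2 - fmin) ≤ B * η := mul_le_mul_of_nonneg_left hη'lt.le hBpos.le
    have h9 : B * η ≤ B * (c * ε / (2 * B)) := mul_le_mul_of_nonneg_left hη2 hBpos.le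
    have h10 : B * (c * ε / (2 * B)) = c * ε / 2 := by
      field_simp
    have h11 : ε * (c / 2) ≤ ε * den := mul_le_mul_of_nonneg_left hden_half hε.le
    have h12 : (fmin + ε) * den = fmin * den + ε * den := by ring
    have h13 : c * ε / 2 = ε * (c / 2) := by ring
    linarith
  -- conclude
  have hTne : T.Nonempty := by
    obtain ⟨r, hr, -⟩ := hkey 1 one_pos
    exact ⟨r, hr⟩
  have hbdd : BddBelow T := ⟨fmin, fun y hy => hTlb y hy⟩
  have hub : ∀ ε > 0, sInf T ≤ fmin + ε := by
    intro ε hε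
    obtain ⟨r, hrT, hrle⟩ := hkey ε hε
    exact le_trans (csInf_le hbdd hrT) hrle
  refine le_antisymm ?_ (le_csInf hTne hTlb)
  by_contra hlt
  push_neg at hlt
  have := hub ((sInf T - fmin) / 2) (by linarith)
  linarith
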